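/- Cyclic ordering of equivalence classes: in the setting below, if the relation ∼ on V′ = V − {p} has exactly ℓ equivalence classes, then there is a bijection i ↦ X_i from {0,1,…,ℓ−1} to the set of classes such that for distinct i,j,k, ε(X_i,X_j,X_k) = 1 if and only if (i,j,k) is a cyclic permutation of its strictly increasing rearrangement. -/

import Mathlib

open scoped Classical

section Defs

variable {V : Type*} {W : Type*}

/-- A map `V³ → ℤ` alternating in its arguments. -/
def IsAlt (f : V → V → V → ℤ) : Prop :=
  (∀ a b c, f b a c = - f a b c) ∧ (∀ a b c, f a c b = - f a b c)

/-- The simplicial cocycle identity. -/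
def IsCocycle (f : V → V → V → ℤ) : Prop :=
  ∀ a b c d, f b c d - f a c d + f a b d - f a b c = 0

/-- A linking function on `V`. -/
def IsLinkingFun (f : V → V → V → ℤ) : Prop := IsAlt f ∧ IsCocycle f

/-- A cycle in the complete graph on `V`: a list of at least 3 distinct vertices. -/
def IsCycle (C : List V) : Prop := C.Nodup ∧ 3 ≤ C.length

/-- The value of `f` on a cycle, via the standard triangulation
`f(C) = ∑_{i=1}^{k-2} f(v₀, vᵢ, vᵢ₊₁)`. -/
def cycleVal (f : V → V → V → ℤ) : List V → ℤ
  | [] => 0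
  | v :: rest => ∑ i ∈ Finset.range (rest.length - 1),
      f v (rest.getD i v) (rest.getD (i + 1) v)

/-- `f` is weak: `|f(C)| ≤ 1` for every cycle `C`. -/
def IsWeak (f : V → V → V → ℤ) : Prop :=
  ∀ C : List V, IsCycle C → |cycleVal f C| ≤ 1

/-- `f` is nontrivial: `f(C) ≠ 0` for some cycle `C`. -/
def IsNontrivial (f : V → V → V → ℤ) : Prop :=
  ∃ C : List V, IsCycle C ∧ cycleVal f C ≠ 0

noncomputable def starEdge (O I : Set V) (x y : V) : ℤ :=
  (if x ∈ O ∧ y ∈ I then 1 else 0) - (if x ∈ I ∧ y ∈ O then 1 else 0)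

/-- The star function `pOI`: the alternating function with value `1` on `(p,q,r)`
for `q ∈ O`, `r ∈ I`, and value `0` on triples not of this form up to reorientation. -/
noncomputable def starFun (p : V) (O I : Set V) (a b c : V) : ℤ :=
  (if a = p then starEdge O I b c else 0)
    - (if b = p then starEdge O I a c else 0)
    + (if c = p then starEdge O I a b else 0)

/-- `({p}, O, I)` is an ordered partition of `V` into three nonempty parts. -/
def IsStarPartition (p : V) (O I : Set V) : Prop :=
  O.Nonempty ∧ I.Nonempty ∧ p ∉ O ∧ p ∉ I ∧ Disjoint O I ∧
    insert p (O ∪ I) = (Set.univ : Set V)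

/-- A bilinking form between `V` and `W`. -/
def IsBilinking (lam : V → V → V → W → W → W → ℤ) : Prop :=
  (∀ u v w, IsLinkingFun (fun a b c => lam a b c u v w)) ∧
  (∀ a b c, IsLinkingFun (lam a b c))

/-- The value of a bilinking form on a pair of cycles. -/
def biCycleVal (lam : V → V → V → W → W → W → ℤ) (C : List V) (D : List W) : ℤ :=
  cycleVal (fun a b c => cycleVal (lam a b c) D) C

/-- `K_V` and `K_W` are weakly linked under `lam`. -/
def WeaklyLinked (lam : V → V → V → W → W → W → ℤ) : Prop :=
  (∀ (C : List V) (D : List W), IsCycle C → IsCycle D → |biCycleVal lam C D| ≤ 1) ∧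
  ∃ (C : List V) (D : List W), IsCycle C ∧ IsCycle D ∧ biCycleVal lam C D ≠ 0

end Defs

/-- The relation `x ∼ y` on `V − {p}`: `x = y`, or the triangle `(p,x,y)` has
`λ`-value `0` against every cycle of `W`. -/
def simRel {V : Type*} {W : Type*} (lam : V → V → V → W → W → W → ℤ)
    (p x y : V) : Prop :=
  x = y ∨ (x ≠ y ∧ ∀ D : List W, IsCycle D → cycleVal (lam p x y) D = 0)

/-- `ε(a,b,c) = +1`: the out-sets of the stars linked by the triangles
`(p,a,b)`, `(p,b,c)`, `(p,c,a)` partition `W − {q}`. -/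
def epsPos {V : Type*} {W : Type*} (lam : V → V → V → W → W → W → ℤ)
    (p : V) (q : W) (a b c : V) : Prop :=
  ∃ A B C : Set W,
    lam p a b = starFun q A ((insert q A)ᶜ) ∧
    lam p b c = starFun q B ((insert q B)ᶜ) ∧
    lam p c a = starFun q C ((insert q C)ᶜ) ∧
    Disjoint A B ∧ Disjoint A C ∧ Disjoint B C ∧
    A ∪ B ∪ C = ({q} : Set W)ᶜ
section MyAux

variable {V : Type*} {W : Type*}

lemma myalt_zero12 {f : V → V → V → ℤ} (h : IsAlt f) (a c : V) : f a a c = 0 := by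
  have := h.1 a a c; omega

lemma myalt_zero23 {f : V → V → V → ℤ} (h : IsAlt f) (a b : V) : f a b b = 0 := by
  have := h.2 a b b; omega

lemma myalt_swap13 {f : V → V → V → ℤ} (h : IsAlt f) (a b c : V) : f c b a = - f a b c := by
  rw [h.1 b c a, h.2 b a c, h.1 a b c]; ring

lemma myalt_zero13 {f : V → V → V → ℤ} (h : IsAlt f) (a b : V) : f a b a = 0 := by
  have := myalt_swap13 h a b a; omega

lemma my_cycleVal_triple (f : V → V → V → ℤ) (a b c : V) :
    cycleVal f [a, b, c] = f a b c := by
  simp [cycleVal]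

lemma my_nodup3 {a b c : V} (hab : a ≠ b) (hac : a ≠ c) (hbc : b ≠ c) :
    ([a, b, c] : List V).Nodup := by simp [hab, hac, hbc]

lemma my_cycle3 {a b c : V} (hab : a ≠ b) (hac : a ≠ c) (hbc : b ≠ c) :
    IsCycle ([a, b, c] : List V) := ⟨my_nodup3 hab hac hbc, by simp⟩

/-- `lam` vanishes on W-triples avoiding `q`. -/
lemma my_zeroW {lam : V → V → V → W → W → W → ℤ} {q : W}
    (hbl : IsBilinking lam)
    (hq : ∀ u v w : W, q ∉ ({u, v, w} : Set W) →
        ∀ C : List V, IsCycle C →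
          cycleVal (fun a b c => lam a b c u v w) C = 0)
    (a b c : V) {u v w : W} (h : q ∉ ({u, v, w} : Set W)) :
    lam a b c u v w = 0 := by
  by_cases hab : a = b
  · subst hab; exact myalt_zero12 (hbl.1 u v w).1 a c
  by_cases hac : a = c
  · subst hac; exact myalt_zero13 (hbl.1 u v w).1 a b
  by_cases hbc : b = c
  · subst hbc; exact myalt_zero23 (hbl.1 u v w).1 a b
  · have := hq u v w h [a, b, c] (my_cycle3 hab hac hbc)
    rwa [my_cycleVal_triple] at this

/-- `lam` vanishes on V-triples avoiding `p`. -/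
lemma my_zeroV {lam : V → V → V → W → W → W → ℤ} {p : V}
    (hbl : IsBilinking lam)
    (hp : ∀ a b c : V, p ∉ ({a, b, c} : Set V) →
        ∀ D : List W, IsCycle D → cycleVal (lam a b c) D = 0)
    {a b c : V} (h : p ∉ ({a, b, c} : Set V)) (u v w : W) :
    lam a b c u v w = 0 := by
  by_cases huv : u = v
  · subst huv; exact myalt_zero12 (hbl.2 a b c).1 u w
  by_cases huw : u = w
  · subst huw; exact myalt_zero13 (hbl.2 a b c).1 u v
  by_cases hvw : v = w
  · subst hvw; exact myalt_zero23 (hbl.2 a b c).1 u v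
  · have := hp a b c h [u, v, w] (my_cycle3 huv huw hvw)
    rwa [my_cycleVal_triple] at this

lemma my_eps_cyc {lam : V → V → V → W → W → W → ℤ} {p : V} {q : W} {x y z : V}
    (h : epsPos lam p q x y z) : epsPos lam p q y z x := by
  obtain ⟨A, B, C, h1, h2, h3, d12, d13, d23, hU⟩ := h
  exact ⟨B, C, A, h2, h3, h1, d23, d12.symm, d13.symm, by
    rw [← hU]; ext s; simp [Set.mem_union]; tauto⟩

end MyAux
section MyAux2

variable {V : Type*} {W : Type*}

lemma my_starEdge_antisym (O I : Set W) (x y : W) :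
    starEdge O I y x = - starEdge O I x y := by
  by_cases hxO : x ∈ O <;> by_cases hxI : x ∈ I <;> by_cases hyO : y ∈ O <;>
    by_cases hyI : y ∈ I <;> simp [starEdge, *]

lemma my_star_alt (q : W) (O I : Set W) : IsAlt (starFun q O I) := by
  constructor <;> intro a b c
  · simp only [starFun]
    rw [my_starEdge_antisym O I a b]
    split_ifs <;> ring
  · simp only [starFun]
    rw [my_starEdge_antisym O I b c]
    split_ifs <;> ring

lemma my_star_noq (q : W) (O I : Set W) {u v w : W} (hu : u ≠ q) (hv : v ≠ q)
    (hw : w ≠ q) : starFun q O I u v w = 0 := by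
  simp [starFun, hu, hv, hw]

lemma my_star_eval {q : W} {A : Set W} (hA : q ∉ A) {s t : W} (hs : s ≠ q) (ht : t ≠ q) :
    starFun q A ((insert q A)ᶜ) q s t
      = (if s ∈ A then (1:ℤ) else 0) - (if t ∈ A then 1 else 0) := by
  simp only [starFun, starEdge, if_pos rfl, if_neg hs, if_neg ht,
    Set.mem_compl_iff, Set.mem_insert_iff]
  by_cases h1 : s ∈ A <;> by_cases h2 : t ∈ A <;> simp [h1, h2, hs, ht]

lemma my_ext {q : W} {f g : W → W → W → ℤ} (hf : IsAlt f) (hg : IsAlt g)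
    (hf0 : ∀ u v w, u ≠ q → v ≠ q → w ≠ q → f u v w = 0)
    (hg0 : ∀ u v w, u ≠ q → v ≠ q → w ≠ q → g u v w = 0)
    (h : ∀ s t, s ≠ q → t ≠ q → f q s t = g q s t) : f = g := by
  have key : ∀ s t, f q s t = g q s t := by
    intro s t
    by_cases hs : s = q
    · subst hs; rw [myalt_zero12 hf, myalt_zero12 hg]
    by_cases ht : t = q
    · subst ht; rw [myalt_zero13 hf, myalt_zero13 hg]
    · exact h s t hs ht
  funext u v w
  by_cases hu : u = q
  · subst hu; exact key v w
  by_cases hv : v = q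
  · rw [hv]
    have e1 := hf.1 q u w
    have e2 := hg.1 q u w
    have h3 := key u w
    omega
  by_cases hw : w = q
  · rw [hw]
    have e1 := myalt_swap13 hf q v u
    have e2 := myalt_swap13 hg q v u
    have h3 := key v u
    omega
  · rw [hf0 u v w hu hv hw, hg0 u v w hu hv hw]

variable {lam : V → V → V → W → W → W → ℤ} {p : V} {q : W}

lemma my_m_swapV (hbl : IsBilinking lam) (x y : V) (s t : W) :
    lam p y x q s t = - lam p x y q s t := by
  have := (hbl.1 q s t).1.2 p x y; simpa using this

lemma my_m_swapW (hbl : IsBilinking lam) (x y : V) (s t : W) :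
    lam p x y q t s = - lam p x y q s t := (hbl.2 p x y).1.2 q s t

lemma my_m_selfV (hbl : IsBilinking lam) (x : V) (s t : W) :
    lam p x x q s t = 0 := by
  have := myalt_zero23 (hbl.1 q s t).1 p x; simpa using this

lemma my_m_qq1 (hbl : IsBilinking lam) (x y : V) (t : W) :
    lam p x y q q t = 0 := myalt_zero12 (hbl.2 p x y).1 q t

lemma my_m_ss (hbl : IsBilinking lam) (x y : V) (s : W) :
    lam p x y q s s = 0 := myalt_zero23 (hbl.2 p x y).1 q s

lemma my_m_add2 (hbl : IsBilinking lam)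
    (hq : ∀ u v w : W, q ∉ ({u, v, w} : Set W) →
        ∀ C : List V, IsCycle C →
          cycleVal (fun a b c => lam a b c u v w) C = 0)
    (x y : V) {s r u : W} (hs : s ≠ q) (hr : r ≠ q) (hu : u ≠ q) :
    lam p x y q s u = lam p x y q s r + lam p x y q r u := by
  have hc := (hbl.2 p x y).2 q s r u
  have h0 : lam p x y s r u = 0 := my_zeroW hbl hq p x y
    (by simp [Set.mem_insert_iff, Ne.symm hs, Ne.symm hr, Ne.symm hu])
  omega

lemma my_m_add1 (hbl : IsBilinking lam)
    (hp : ∀ a b c : V, p ∉ ({a, b, c} : Set V) →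
        ∀ D : List W, IsCycle D → cycleVal (lam a b c) D = 0)
    {x y z : V} (hx : x ≠ p) (hy : y ≠ p) (hz : z ≠ p) (s t : W) :
    lam p x z q s t = lam p x y q s t + lam p y z q s t := by
  have hc := (hbl.1 q s t).2 p x y z
  simp only [] at hc
  have h0 : lam x y z q s t = 0 := my_zeroV hbl hp
    (by simp [Set.mem_insert_iff, Ne.symm hx, Ne.symm hy, Ne.symm hz]) q s t
  omega

lemma my_m_bound (hbl : IsBilinking lam) (hwl : WeaklyLinked lam)
    {x y : V} {s t : W} (hx : x ≠ p) (hy : y ≠ p) (hxy : x ≠ y)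
    (hs : s ≠ q) (ht : t ≠ q) (hst : s ≠ t) :
    |lam p x y q s t| ≤ 1 := by
  have h := hwl.1 [p, x, y] [q, s, t]
    (my_cycle3 (Ne.symm hx) (Ne.symm hy) hxy)
    (my_cycle3 (Ne.symm hs) (Ne.symm ht) hst)
  simp only [biCycleVal, my_cycleVal_triple] at h
  exact h

lemma my_funzero (hbl : IsBilinking lam)
    (hq : ∀ u v w : W, q ∉ ({u, v, w} : Set W) →
        ∀ C : List V, IsCycle C →
          cycleVal (fun a b c => lam a b c u v w) C = 0)
    (x y : V) (h : ∀ s t, s ≠ q → t ≠ q → lam p x y q s t = 0) :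
    ∀ u v w, lam p x y u v w = 0 := by
  have hz : lam p x y = (fun _ _ _ => (0:ℤ)) :=
    my_ext (q := q) (hbl.2 p x y).1 ⟨fun _ _ _ => by ring, fun _ _ _ => by ring⟩
      (fun u v w hu hv hw => my_zeroW hbl hq p x y
        (by simp [Set.mem_insert_iff, Ne.symm hu, Ne.symm hv, Ne.symm hw]))
      (fun _ _ _ _ _ _ => rfl)
      (fun s t hs ht => h s t hs ht)
  intro u v w
  exact congrFun (congrFun (congrFun hz u) v) w

lemma my_simRel_of (hbl : IsBilinking lam)
    (hq : ∀ u v w : W, q ∉ ({u, v, w} : Set W) →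
        ∀ C : List V, IsCycle C →
          cycleVal (fun a b c => lam a b c u v w) C = 0)
    {x y : V} (hxy : x ≠ y)
    (h : ∀ s t, s ≠ q → t ≠ q → lam p x y q s t = 0) : simRel lam p x y := by
  refine Or.inr ⟨hxy, fun D _ => ?_⟩
  have h0 := my_funzero hbl hq x y h
  cases D with
  | nil => simp [cycleVal]
  | cons v rest => simp [cycleVal, h0]

lemma my_star_iff (hbl : IsBilinking lam)
    (hq : ∀ u v w : W, q ∉ ({u, v, w} : Set W) →
        ∀ C : List V, IsCycle C →
          cycleVal (fun a b c => lam a b c u v w) C = 0)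
    (x y : V) {A : Set W} (hA : q ∉ A) :
    lam p x y = starFun q A ((insert q A)ᶜ) ↔
      (∀ s t, s ≠ q → t ≠ q →
        lam p x y q s t = (if s ∈ A then (1:ℤ) else 0) - (if t ∈ A then 1 else 0)) := by
  constructor
  · intro h s t hs ht; rw [h, my_star_eval hA hs ht]
  · intro h
    refine my_ext (hbl.2 p x y).1 (my_star_alt q A _)
      (fun u v w hu hv hw => my_zeroW hbl hq p x y
        (by simp [Set.mem_insert_iff, Ne.symm hu, Ne.symm hv, Ne.symm hw]))
      (fun u v w hu hv hw => my_star_noq q A _ hu hv hw)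
      (fun s t hs ht => by rw [h s t hs ht, my_star_eval hA hs ht])

end MyAux2
/-- cyclic ordering of the `∼`-equivalence classes. -/
theorem cyclic_ordering_of_classes {V : Type*} {W : Type*} [Fintype V] [Fintype W]
    (hV : 5 ≤ Fintype.card V)
    (lam : V → V → V → W → W → W → ℤ)
    (hbl : IsBilinking lam) (hwl : WeaklyLinked lam)
    (p : V) (q : W)
    (hp : ∀ a b c : V, p ∉ ({a, b, c} : Set V) →
        ∀ D : List W, IsCycle D → cycleVal (lam a b c) D = 0)
    (hq : ∀ u v w : W, q ∉ ({u, v, w} : Set W) →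
        ∀ C : List V, IsCycle C →
          cycleVal (fun a b c => lam a b c u v w) C = 0)
    (ℓ : ℕ) (hl : 2 ≤ ℓ)
    -- `∼` has exactly ℓ equivalence classes on V − {p}
    (hcl : ∃ t : Fin ℓ → V, (∀ i, t i ≠ p) ∧
        (∀ i j, simRel lam p (t i) (t j) → i = j) ∧
        (∀ v : V, v ≠ p → ∃ i, simRel lam p v (t i))) :
    ∃ x : Fin ℓ → V, (∀ i, x i ≠ p) ∧
      (∀ i j, simRel lam p (x i) (x j) → i = j) ∧
      (∀ v : V, v ≠ p → ∃ i, simRel lam p v (x i)) ∧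
      ∀ i j k : Fin ℓ, i ≠ j → i ≠ k → j ≠ k →
        (epsPos lam p q (x i) (x j) (x k) ↔
          ((i < j ∧ j < k) ∨ (j < k ∧ k < i) ∨ (k < i ∧ i < j))) := by
  obtain ⟨t, ht1, ht2, ht3⟩ := hcl
  have tne : ∀ i j : Fin ℓ, i ≠ j → t i ≠ t j := fun i j hij he => hij (ht2 i j (Or.inl he))
  have nsim : ∀ i j : Fin ℓ, i ≠ j → ¬ simRel lam p (t i) (t j) :=
    fun i j hij hs => hij (ht2 i j hs)
  have nonconst : ∀ i j : Fin ℓ, i ≠ j →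
      ∃ s r : W, s ≠ q ∧ r ≠ q ∧ lam p (t i) (t j) q s r ≠ 0 := by
    intro i j hij
    by_contra hcon
    push_neg at hcon
    exact nsim i j hij (my_simRel_of hbl hq (tne i j hij)
      (fun s r hs hr => hcon s r hs hr))
  set i0 : Fin ℓ := ⟨0, by omega⟩ with hi0def
  set i1 : Fin ℓ := ⟨1, by omega⟩ with hi1def
  have hi01 : i0 ≠ i1 := by simp [hi0def, hi1def, Fin.ext_iff]
  obtain ⟨w0, r0, hw0, hr0, hm0⟩ := nonconst i0 i1 hi01
  -- the potential functions
  set g : Fin ℓ → W → ℤ := fun i s => lam p (t i) (t i0) q s w0 with hg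
  have hgw0 : ∀ i, g i w0 = 0 := fun i => my_m_ss hbl _ _ _
  have hgbase : ∀ s, g i0 s = 0 := fun s => my_m_selfV hbl _ _ _
  have hsingle : ∀ (i : Fin ℓ) (s r : W), s ≠ q → r ≠ q →
      lam p (t i) (t i0) q s r = g i s - g i r := by
    intro i s r hs hr
    have h3 := my_m_add2 (p := p) hbl hq (t i) (t i0) hs hw0 hr
    have h4 := my_m_swapW (p := p) (q := q) hbl (t i) (t i0) r w0
    simp only [hg]
    omega
  have hg_m : ∀ (i j : Fin ℓ) (s r : W), s ≠ q → r ≠ q →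
      lam p (t i) (t j) q s r = (g i s - g j s) - (g i r - g j r) := by
    intro i j s r hs hr
    have h1 := my_m_add1 (q := q) hbl hp (ht1 i) (ht1 i0) (ht1 j) s r
    have h2 := my_m_swapV (p := p) (q := q) hbl (t j) (t i0) s r
    have h5 := hsingle i s r hs hr
    have h6 := hsingle j s r hs hr
    omega
  have hgbnd : ∀ (i : Fin ℓ) (s r : W), s ≠ q → r ≠ q → |g i s - g i r| ≤ 1 := by
    intro i s r hs hr
    by_cases hir : i = i0
    · subst hir; rw [hgbase, hgbase]; simp
    by_cases hsr : s = r
    · subst hsr; simp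
    · have hb := my_m_bound hbl hwl (ht1 i) (ht1 i0) (tne i i0 hir) hs hr hsr
      have e := hg_m i i0 s r hs hr
      rw [hgbase, hgbase] at e
      rw [abs_le] at hb ⊢
      omega
  have hval : ∀ (i : Fin ℓ) (s : W), s ≠ q → g i s = -1 ∨ g i s = 0 ∨ g i s = 1 := by
    intro i s hs
    have := hgbnd i s w0 hs hw0
    rw [hgw0 i, sub_zero, abs_le] at this
    omega
  set bot : Fin ℓ → ℤ := fun i => if ∃ s, s ≠ q ∧ g i s = -1 then -1 else 0 with hbot
  have htwo : ∀ (i : Fin ℓ) (s : W), s ≠ q → g i s = bot i ∨ g i s = bot i + 1 := by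
    intro i s hs
    simp only [hbot]
    split_ifs with hex
    · obtain ⟨r, hr, hgr⟩ := hex
      have hb := hgbnd i s r hs hr
      have hv := hval i s hs
      rw [abs_le] at hb
      omega
    · push_neg at hex
      have hv := hval i s hs
      have := hex s hs
      omega
  set Tset : Fin ℓ → Set W := fun i => {s | s ≠ q ∧ g i s = bot i + 1} with hT
  have hTmem : ∀ (i : Fin ℓ) (s : W), s ∈ Tset i ↔ (s ≠ q ∧ g i s = bot i + 1) :=
    fun i s => by simp [hT]
  have hqT : ∀ i, q ∉ Tset i := fun i h => ((hTmem i q).1 h).1 rfl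
  set chi : Fin ℓ → W → ℤ := fun i s => if s ∈ Tset i then 1 else 0 with hchidef
  have hchi : ∀ (i : Fin ℓ) (s : W), s ≠ q → g i s = bot i + chi i s := by
    intro i s hs
    simp only [hchidef]
    by_cases hmem : s ∈ Tset i
    · rw [if_pos hmem]
      exact ((hTmem i s).1 hmem).2
    · rw [if_neg hmem]
      have h2 := htwo i s hs
      have h3 : g i s ≠ bot i + 1 := fun he => hmem ((hTmem i s).2 ⟨hs, he⟩)
      omega
  have hmm : ∀ (i j : Fin ℓ) (s r : W), s ≠ q → r ≠ q →
      lam p (t i) (t j) q s r = (chi i s - chi j s) - (chi i r - chi j r) := by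
    intro i j s r hs hr
    rw [hg_m i j s r hs hr]
    have e1 := hchi i s hs
    have e2 := hchi j s hs
    have e3 := hchi i r hr
    have e4 := hchi j r hr
    omega
  have hb0 : bot i0 = 0 := by simp [hbot, hgbase]
  have hT0 : Tset i0 = ∅ := by
    ext s; simp [hT, hgbase, hb0]
  have hTchain : ∀ i j : Fin ℓ, Tset i ⊆ Tset j ∨ Tset j ⊆ Tset i := by
    intro i j
    by_cases hij : i = j
    · subst hij; exact Or.inl subset_rfl
    by_contra hcon
    push_neg at hcon
    obtain ⟨h1, h2⟩ := hcon
    rw [Set.not_subset] at h1 h2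
    obtain ⟨s, hsT, hsN⟩ := h1
    obtain ⟨r, hrT, hrN⟩ := h2
    have hs : s ≠ q := ((hTmem i s).1 hsT).1
    have hr : r ≠ q := ((hTmem j r).1 hrT).1
    have hsr : s ≠ r := fun he => hsN (he ▸ hrT)
    have hb := my_m_bound hbl hwl (ht1 i) (ht1 j) (tne i j hij) hs hr hsr
    have he := hmm i j s r hs hr
    have c1 : chi i s = 1 := by simp [hchidef, hsT]
    have c2 : chi j s = 0 := by simp [hchidef, hsN]
    have c3 : chi i r = 0 := by simp [hchidef, hrN]
    have c4 : chi j r = 1 := by simp [hchidef, hrT]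
    rw [abs_le] at hb
    omega
  have hTne : ∀ i j : Fin ℓ, i ≠ j → Tset i ≠ Tset j := by
    intro i j hij he
    apply nsim i j hij
    apply my_simRel_of hbl hq (tne i j hij)
    intro s r hs hr
    rw [hmm i j s r hs hr]
    have hce : chi i = chi j := by
      funext u; simp only [hchidef, he]
    rw [hce]; ring
  have hTstrict : ∀ i j : Fin ℓ, i ≠ j → Tset i ⊂ Tset j ∨ Tset j ⊂ Tset i := by
    intro i j hij
    rcases hTchain i j with h | h
    · exact Or.inl (h.ssubset_of_ne (hTne i j hij))
    · exact Or.inr (h.ssubset_of_ne (hTne j i (Ne.symm hij)))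
  have hnonempty : ∀ i : Fin ℓ, i ≠ i0 →
      (∃ s, s ∈ Tset i) ∧ (∃ s, s ≠ q ∧ s ∉ Tset i) := by
    intro i hi
    obtain ⟨s, r, hs, hr, hm⟩ := nonconst i i0 hi
    have he := hmm i i0 s r hs hr
    have hchi0 : ∀ u, chi i0 u = 0 := fun u => by simp [hchidef, hT0]
    rw [hchi0, hchi0] at he
    by_cases ms : s ∈ Tset i <;> by_cases mr : r ∈ Tset i
    · exfalso; apply hm; rw [he]; simp [hchidef, ms, mr]
    · exact ⟨⟨s, ms⟩, ⟨r, hr, mr⟩⟩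
    · exact ⟨⟨r, mr⟩, ⟨s, hs, ms⟩⟩
    · exfalso; apply hm; rw [he]; simp [hchidef, ms, mr]
  have hnoss : ∀ i j : Fin ℓ, Tset i ⊂ Tset j → ¬ (Tset j ⊂ Tset i) := by
    intro i j h hc
    exact (ne_of_ssubset h) (subset_antisymm h.subset hc.subset)
  -- determination of the out-sets
  have hAdet : ∀ (i j : Fin ℓ) (A : Set W), i ≠ j → q ∉ A →
      (∀ s r, s ≠ q → r ≠ q →
        lam p (t i) (t j) q s r = (if s ∈ A then (1:ℤ) else 0) - (if r ∈ A then 1 else 0)) →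
      ∀ s, s ≠ q → ((if s ∈ A then (1:ℤ) else 0)
          = chi i s - chi j s + (if Tset i ⊂ Tset j then 1 else 0)) := by
    intro i j A hij hqA heq s hs
    rcases hTstrict i j hij with hlt | hlt
    · -- Tset i ⊂ Tset j
      obtain ⟨s1, hs1j, hs1i⟩ := Set.exists_of_ssubset hlt
      have hjne : j ≠ i0 := by
        rintro rfl
        rw [hT0] at hlt
        obtain ⟨x, hx, _⟩ := Set.exists_of_ssubset hlt
        simpa using hx
      obtain ⟨s2, hs2q, hs2j⟩ := (hnonempty j hjne).2
      have hs1q : s1 ≠ q := ((hTmem j s1).1 hs1j).1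
      have hs2i : s2 ∉ Tset i := fun h => hs2j (hlt.subset h)
      have hcomb : (if s1 ∈ A then (1:ℤ) else 0) - (if s2 ∈ A then 1 else 0) = -1 := by
        rw [← heq s1 s2 hs1q hs2q, hmm i j s1 s2 hs1q hs2q]
        simp [hchidef, hs1i, hs1j, hs2i, hs2j]
      have h2A : s2 ∈ A := by
        by_contra h2A
        rw [if_neg h2A, sub_zero] at hcomb
        split_ifs at hcomb <;> omega
      have hcb : (if s ∈ A then (1:ℤ) else 0) - (if s2 ∈ A then 1 else 0)
          = (chi i s - chi j s) - (chi i s2 - chi j s2) := by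
        rw [← heq s s2 hs hs2q, hmm i j s s2 hs hs2q]
      rw [if_pos h2A] at hcb
      have ci2 : chi i s2 = 0 := by simp [hchidef, hs2i]
      have cj2 : chi j s2 = 0 := by simp [hchidef, hs2j]
      rw [if_pos hlt]
      omega
    · -- Tset j ⊂ Tset i
      obtain ⟨s1, hs1i, hs1j⟩ := Set.exists_of_ssubset hlt
      have hine : i ≠ i0 := by
        rintro rfl
        rw [hT0] at hlt
        obtain ⟨x, hx, _⟩ := Set.exists_of_ssubset hlt
        simpa using hx
      obtain ⟨s2, hs2q, hs2i⟩ := (hnonempty i hine).2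
      have hs1q : s1 ≠ q := ((hTmem i s1).1 hs1i).1
      have hs2j : s2 ∉ Tset j := fun h => hs2i (hlt.subset h)
      have hcomb : (if s1 ∈ A then (1:ℤ) else 0) - (if s2 ∈ A then 1 else 0) = 1 := by
        rw [← heq s1 s2 hs1q hs2q, hmm i j s1 s2 hs1q hs2q]
        simp [hchidef, hs1i, hs1j, hs2i, hs2j]
      have h2A : s2 ∉ A := by
        intro hmem
        rw [if_pos hmem] at hcomb
        split_ifs at hcomb <;> omega
      have hcb : (if s ∈ A then (1:ℤ) else 0) - (if s2 ∈ A then 1 else 0)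
          = (chi i s - chi j s) - (chi i s2 - chi j s2) := by
        rw [← heq s s2 hs hs2q, hmm i j s s2 hs hs2q]
      rw [if_neg h2A] at hcb
      have ci2 : chi i s2 = 0 := by simp [hchidef, hs2i]
      have cj2 : chi j s2 = 0 := by simp [hchidef, hs2j]
      rw [if_neg (hnoss j i hlt)]
      omega
  -- the core construction
  have coreEps : ∀ a b c : Fin ℓ, a ≠ b → b ≠ c → a ≠ c →
      Tset c ⊂ Tset b → Tset b ⊂ Tset a → epsPos lam p q (t a) (t b) (t c) := by
    intro a b c hab hbc hac h1 h2
    have hmemq : ∀ (i : Fin ℓ) (u : W), u ∈ Tset i → u ≠ q :=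
      fun i u hu => ((hTmem i u).1 hu).1
    refine ⟨Tset a \ Tset b, Tset b \ Tset c, {s | s ≠ q ∧ s ∉ Tset a \ Tset c},
      ?_, ?_, ?_, ?_, ?_, ?_, ?_⟩
    · rw [my_star_iff hbl hq (t a) (t b) (fun h => hqT a h.1)]
      intro s r hs hr
      rw [hmm a b s r hs hr]
      by_cases m1 : s ∈ Tset a <;> by_cases m2 : s ∈ Tset b <;>
        by_cases m3 : r ∈ Tset a <;> by_cases m4 : r ∈ Tset b <;>
        first
          | exact absurd (h2.subset m2) m1
          | exact absurd (h2.subset m4) m3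
          | simp [hchidef, Set.mem_diff, m1, m2, m3, m4]
    · rw [my_star_iff hbl hq (t b) (t c) (fun h => hqT b h.1)]
      intro s r hs hr
      rw [hmm b c s r hs hr]
      by_cases m1 : s ∈ Tset b <;> by_cases m2 : s ∈ Tset c <;>
        by_cases m3 : r ∈ Tset b <;> by_cases m4 : r ∈ Tset c <;>
        first
          | exact absurd (h1.subset m2) m1
          | exact absurd (h1.subset m4) m3
          | simp [hchidef, Set.mem_diff, m1, m2, m3, m4]
    · rw [my_star_iff hbl hq (t c) (t a) (fun h => h.1 rfl)]
      have hsub : Tset c ⊆ Tset a := h1.subset.trans h2.subset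
      intro s r hs hr
      rw [hmm c a s r hs hr]
      by_cases m1 : s ∈ Tset a <;> by_cases m2 : s ∈ Tset c <;>
        by_cases m3 : r ∈ Tset a <;> by_cases m4 : r ∈ Tset c <;>
        first
          | exact absurd (hsub m2) m1
          | exact absurd (hsub m4) m3
          | simp [hchidef, Set.mem_diff, Set.mem_setOf_eq, m1, m2, m3, m4, hs, hr]
    · rw [Set.disjoint_left]
      rintro s ⟨_, hsb⟩ ⟨hsb', _⟩
      exact hsb hsb'
    · rw [Set.disjoint_left]
      rintro s ⟨hsa, hsb⟩ ⟨_, hsc⟩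
      exact hsc ⟨hsa, fun hc => hsb (h1.subset hc)⟩
    · rw [Set.disjoint_left]
      rintro s ⟨hsb, hsc⟩ ⟨_, hsc'⟩
      exact hsc' ⟨h2.subset hsb, hsc⟩
    · ext s
      simp only [Set.mem_union, Set.mem_diff, Set.mem_setOf_eq, Set.mem_compl_iff,
        Set.mem_singleton_iff]
      constructor
      · rintro ((⟨h, _⟩ | ⟨h, _⟩) | ⟨h, _⟩)
        exacts [hmemq a s h, hmemq b s h, h]
      · intro hsq
        by_cases m1 : s ∈ Tset a
        · by_cases m2 : s ∈ Tset b
          · by_cases m3 : s ∈ Tset c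
            · exact Or.inr ⟨hsq, fun hd => hd.2 m3⟩
            · exact Or.inl (Or.inr ⟨m2, m3⟩)
          · have m3 : s ∉ Tset c := fun h => m2 (h1.subset h)
            exact Or.inl (Or.inl ⟨m1, m2⟩)
        · exact Or.inr ⟨hsq, fun hd => m1 hd.1⟩
  -- the characterization of epsPos
  have epsChar : ∀ a b c : Fin ℓ, a ≠ b → b ≠ c → a ≠ c →
      (epsPos lam p q (t a) (t b) (t c) ↔
        ((if Tset a ⊂ Tset b then (1:ℤ) else 0) + (if Tset b ⊂ Tset c then 1 else 0)
          + (if Tset c ⊂ Tset a then 1 else 0) = 1)) := by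
    intro a b c hab hbc hac
    constructor
    · rintro ⟨A, B, C, hA, hB, hC, dAB, dAC, dBC, hU⟩
      have hsub : A ∪ B ∪ C ⊆ ({q} : Set W)ᶜ := le_of_eq hU
      have hqA : q ∉ A := fun h =>
        (hsub (Set.mem_union_left _ (Set.mem_union_left _ h))) rfl
      have hqB : q ∉ B := fun h =>
        (hsub (Set.mem_union_left _ (Set.mem_union_right _ h))) rfl
      have hqC : q ∉ C := fun h => (hsub (Set.mem_union_right _ h)) rfl
      have fA := hAdet a b A hab hqA ((my_star_iff hbl hq (t a) (t b) hqA).1 hA)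
      have fB := hAdet b c B hbc hqB ((my_star_iff hbl hq (t b) (t c) hqB).1 hB)
      have fC := hAdet c a C (Ne.symm hac) hqC ((my_star_iff hbl hq (t c) (t a) hqC).1 hC)
      have hw0mem : w0 ∈ A ∪ B ∪ C := by rw [hU]; exact hw0
      have hsum : (if w0 ∈ A then (1:ℤ) else 0) + (if w0 ∈ B then 1 else 0)
          + (if w0 ∈ C then 1 else 0) = 1 := by
        rcases hw0mem with (mA | mB) | mC
        · have nB := Set.disjoint_left.1 dAB mA
          have nC := Set.disjoint_left.1 dAC mA
          simp [mA, nB, nC]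
        · have nA := Set.disjoint_right.1 dAB mB
          have nC := Set.disjoint_left.1 dBC mB
          simp [mB, nA, nC]
        · have nA := Set.disjoint_right.1 dAC mC
          have nB := Set.disjoint_right.1 dBC mC
          simp [mC, nA, nB]
      rw [fA w0 hw0, fB w0 hw0, fC w0 hw0] at hsum
      linear_combination hsum
    · intro h
      by_cases H1 : Tset a ⊂ Tset b <;> by_cases H2 : Tset b ⊂ Tset c <;>
        by_cases H3 : Tset c ⊂ Tset a
      · rw [if_pos H1, if_pos H2, if_pos H3] at h; omega
      · rw [if_pos H1, if_pos H2, if_neg H3] at h; omega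
      · rw [if_pos H1, if_neg H2, if_pos H3] at h; omega
      · -- only H1 : Ta ⊂ Tb ; then Ta ⊂ Tc ⊂ Tb
        have hTcb : Tset c ⊂ Tset b := (hTstrict b c hbc).resolve_left H2
        have hTac : Tset a ⊂ Tset c := (hTstrict c a (Ne.symm hac)).resolve_left H3
        exact my_eps_cyc (my_eps_cyc (coreEps b c a hbc (Ne.symm hac) (Ne.symm hab) hTac hTcb))
      · rw [if_neg H1, if_pos H2, if_pos H3] at h; omega
      · -- only H2 : Tb ⊂ Tc ; then Tb ⊂ Ta ⊂ Tc
        have hTba : Tset b ⊂ Tset a := (hTstrict a b hab).resolve_left H1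
        have hTac : Tset a ⊂ Tset c := (hTstrict c a (Ne.symm hac)).resolve_left H3
        exact my_eps_cyc (coreEps c a b (Ne.symm hac) hab (Ne.symm hbc) hTba hTac)
      · -- only H3 : Tc ⊂ Ta ; then Tc ⊂ Tb ⊂ Ta
        have hTba : Tset b ⊂ Tset a := (hTstrict a b hab).resolve_left H1
        have hTcb : Tset c ⊂ Tset b := (hTstrict b c hbc).resolve_left H2
        exact coreEps a b c hab hbc hac hTcb hTba
      · rw [if_neg H1, if_neg H2, if_neg H3] at h; omega
  -- sorting the classes by the cardinality of their T-sets
  have keyInj : ∀ i j : Fin ℓ, (Tset i).ncard = (Tset j).ncard → i = j := by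
    intro i j h
    by_contra hne
    rcases hTstrict i j hne with h' | h'
    · have := Set.ncard_lt_ncard h' (Set.toFinite _); omega
    · have := Set.ncard_lt_ncard h' (Set.toFinite _); omega
  have hcard_iff : ∀ i j : Fin ℓ, i ≠ j →
      (Tset i ⊂ Tset j ↔ (Tset i).ncard < (Tset j).ncard) := by
    intro i j hij
    constructor
    · exact fun h => Set.ncard_lt_ncard h (Set.toFinite _)
    · intro h
      rcases hTstrict i j hij with h' | h'
      · exact h'
      · have := Set.ncard_lt_ncard h' (Set.toFinite _); omega
  set σ : Equiv.Perm (Fin ℓ) := Tuple.sort (fun i : Fin ℓ => (Tset i).ncard) with hσ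
  have hsm : StrictMono (fun a : Fin ℓ => (Tset (σ a)).ncard) := by
    have hmono := Tuple.monotone_sort (fun i : Fin ℓ => (Tset i).ncard)
    have hinj : Function.Injective
        ((fun i : Fin ℓ => (Tset i).ncard) ∘ (Tuple.sort (fun i : Fin ℓ => (Tset i).ncard))) :=
      fun a b hab => (Tuple.sort _).injective (keyInj _ _ hab)
    have := hmono.strictMono_of_injective hinj
    exact this
  have hord1 : ∀ a b : Fin ℓ, a < b → Tset (σ a) ⊂ Tset (σ b) := by
    intro a b h
    have hne : σ a ≠ σ b := fun he => (ne_of_lt h) (σ.injective he)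
    exact (hcard_iff _ _ hne).2 (hsm h)
  have hord : ∀ a b : Fin ℓ, a < b ↔ Tset (σ a) ⊂ Tset (σ b) := by
    intro a b
    constructor
    · exact hord1 a b
    · intro h
      rcases lt_trichotomy a b with hl | he | hl
      · exact hl
      · exfalso; rw [he] at h; exact (ne_of_ssubset h) rfl
      · exact absurd (subset_antisymm h.subset (hord1 b a hl).subset) (ne_of_ssubset h)
  refine ⟨fun i => t (σ i.rev), fun i => ht1 _, ?_, ?_, ?_⟩
  · intro i j hsim
    have h1 := ht2 _ _ hsim
    have h2 := σ.injective h1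
    exact Fin.rev_inj.mp h2
  · intro v hv
    obtain ⟨i, hi⟩ := ht3 v hv
    refine ⟨(σ.symm i).rev, ?_⟩
    simp only [Fin.rev_rev, Equiv.apply_symm_apply]
    exact hi
  · intro i j k hij hik hjk
    have d1 : σ i.rev ≠ σ j.rev := fun h => hij (Fin.rev_inj.mp (σ.injective h))
    have d2 : σ j.rev ≠ σ k.rev := fun h => hjk (Fin.rev_inj.mp (σ.injective h))
    have d3 : σ i.rev ≠ σ k.rev := fun h => hik (Fin.rev_inj.mp (σ.injective h))
    rw [epsChar (σ i.rev) (σ j.rev) (σ k.rev) d1 d2 d3]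
    have c1 : (Tset (σ i.rev) ⊂ Tset (σ j.rev)) ↔ j < i := by
      rw [← hord i.rev j.rev]; exact Fin.rev_lt_rev
    have c2 : (Tset (σ j.rev) ⊂ Tset (σ k.rev)) ↔ k < j := by
      rw [← hord j.rev k.rev]; exact Fin.rev_lt_rev
    have c3 : (Tset (σ k.rev) ⊂ Tset (σ i.rev)) ↔ i < k := by
      rw [← hord k.rev i.rev]; exact Fin.rev_lt_rev
    simp only [c1, c2, c3]
    have hij' : (i : ℕ) ≠ (j : ℕ) := by simpa [Fin.ext_iff] using hij
    have hik' : (i : ℕ) ≠ (k : ℕ) := by simpa [Fin.ext_iff] using hik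
    have hjk' : (j : ℕ) ≠ (k : ℕ) := by simpa [Fin.ext_iff] using hjk
    by_cases o1 : j < i <;> by_cases o2 : k < j <;> by_cases o3 : i < k <;>
      simp only [o1, o2, o3, iff_true, iff_false, if_true, if_false, ite_true, ite_false,
        eq_self_iff_true] <;>
      simp only [Fin.lt_def] at o1 o2 o3 ⊢ <;>
      omega
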